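/- Let A be a unital commutative C*-algebra and V a finite free A-module with a non-degenerate Hermitian sesquilinear form. If (e_i) and (e'_i) are two bases with Gram determinants g and g' respectively, and both determinants are invertible, then |g'|·g'⁻¹ = |g|·g⁻¹. That is, the signature ν = |g|/g is independent of the choice of basis. -/

import Mathlib

/-- The signature `ν = |g|/g` of a non-degenerate Hermitian sesquilinear form
on a finite free module over a commutative unital C*-algebra does not depend
on the choice of basis: if `g`, `g'` are the (invertible) Gram determinants of
two bases and `m = |g|`, `m' = |g'|` are the positive square roots of `g²`,
`g'²`, then `|g'|·g'⁻¹ = |g|·g⁻¹`. -/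
theorem signature_independent_of_basis {A : Type*} [CommCStarAlgebra A]
    [PartialOrder A] [StarOrderedRing A]
    {ι : Type*} [Fintype ι] [DecidableEq ι]
    {V : Type*} [AddCommGroup V] [Module A V]
    (inner : V → V → A)
    (hlin : ∀ x : V, IsLinearMap A fun y => inner y x)
    (hsymm : ∀ x y : V, inner y x = star (inner x y))
    (b b' : Module.Basis ι A V) (g g' : A)
    (hg : g = Matrix.det (Matrix.of fun i j => inner (b i) (b j)))
    (hg' : g' = Matrix.det (Matrix.of fun i j => inner (b' i) (b' j)))
    (hgu : IsUnit g) (hgu' : IsUnit g')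
    (m m' : A) (hm : 0 ≤ m) (hm2 : m ^ 2 = g ^ 2)
    (hm' : 0 ≤ m') (hm2' : m' ^ 2 = g' ^ 2) :
    m' * Ring.inverse g' = m * Ring.inverse g := by
  classical
  -- change of basis matrix
  set P : Matrix ι ι A := Matrix.of fun i k => b.repr (b' i) k with hP
  set G : Matrix ι ι A := Matrix.of fun i j => inner (b i) (b j) with hG
  set G' : Matrix ι ι A := Matrix.of fun i j => inner (b' i) (b' j) with hG'
  have hb' : ∀ i, b' i = ∑ k, P i k • b k := fun i => (b.sum_repr (b' i)).symm
  -- linearity in the first argument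
  have hsum : ∀ (c : ι → A) (x : V),
      inner (∑ k, c k • b k) x = ∑ k, c k * inner (b k) x := by
    intro c x
    have := map_sum (IsLinearMap.mk' _ (hlin x)) (fun k => c k • b k) Finset.univ
    simp only [IsLinearMap.mk'_apply] at this
    rw [this]
    refine Finset.sum_congr rfl fun k _ => ?_
    simpa using (hlin x).map_smul (c k) (b k)
  have key : G' = P * G * P.conjTranspose := by
    ext i j
    have h1 : inner (b' i) (b' j)
        = ∑ k, P i k * inner (b k) (b' j) := by
      rw [hb' i, hsum]
    have h2 : ∀ k, inner (b k) (b' j) = ∑ l, star (P j l) * inner (b k) (b l) := by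
      intro k
      rw [hsymm, hb' j, hsum, star_sum]
      refine Finset.sum_congr rfl fun l _ => ?_
      rw [star_mul', ← hsymm]
    have h3 : inner (b' i) (b' j)
        = ∑ k, ∑ l, P i k * (star (P j l) * inner (b k) (b l)) := by
      rw [h1]
      exact Finset.sum_congr rfl fun k _ => by rw [h2 k, Finset.mul_sum]
    show inner (b' i) (b' j) = (P * G * P.conjTranspose) i j
    rw [h3, Finset.sum_comm]
    simp only [Matrix.mul_apply, Matrix.conjTranspose_apply, Finset.sum_mul]
    refine Finset.sum_congr rfl fun l _ => Finset.sum_congr rfl fun k _ => ?_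
    show P i k * (star (P j l) * inner (b k) (b l))
        = P i k * inner (b k) (b l) * star (P j l)
    ring
  set d : A := P.det with hd
  set p : A := star d * d with hp
  have hpg : g' = p * g := by
    rw [hg', hg]
    show G'.det = p * G.det
    rw [key, Matrix.det_mul, Matrix.det_mul, Matrix.det_conjTranspose]
    ring
  have hp0 : (0 : A) ≤ p := star_mul_self_nonneg d
  have hpu : IsUnit p := by
    have := hgu'.mul (hgu.unit⁻¹).isUnit
    refine isUnit_of_mul_isUnit_left (y := g) ?_
    rw [← hpg]; exact hgu'
  -- m * p is the positive square root of g'^2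
  have hmp0 : (0 : A) ≤ m * p := by
    have : m * p = star d * m * d := by rw [hp]; ring
    rw [this]
    exact star_left_conjugate_nonneg hm d
  have hsq : (m * p) ^ 2 = m' ^ 2 := by
    rw [hm2', hpg, mul_pow, mul_pow, hm2]; ring
  have hmm : m' = m * p := by
    calc m' = CFC.sqrt (m' ^ 2) := (CFC.sqrt_sq m' hm').symm
    _ = CFC.sqrt ((m * p) ^ 2) := by rw [hsq]
    _ = m * p := CFC.sqrt_sq _ hmp0
  rw [hmm, hpg, Ring.mul_inverse_rev]
  rw [show m * p * (Ring.inverse g * Ring.inverse p)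
      = m * Ring.inverse g * (p * Ring.inverse p) by ring,
    Ring.mul_inverse_cancel p hpu, mul_one]
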